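/- Let T be a finite set of terms of S^m_d generating the monomial submodule U ⊆ S^m_d, and let M ⊆ S^m_d be a graded submodule such that for every degree s the residues of the terms in N(U)_s generate the A-module (S^m_d)_s/M_s. Then for every degree s there exists a set F ⊆ M_s of marked homogeneous elements, one element f with head term τ and supp(f − τ) ⊆ N(U) for each term τ of U of degree s, such that (S^m_d)_s = ⟨F⟩^A ⊕ ⟨N(U)_s⟩^A as A-modules. -/

import Mathlib

open MvPolynomial

namespace MB

/-- Exponent (multi-index) of a term in the variables `x_0, …, x_n`. -/
abbrev Exp (n : ℕ) := Fin (n+1) →₀ ℕ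

variable {n : ℕ}

/-- Total degree of a term. -/
def degE (α : Exp n) : ℕ := α.sum fun _ e => e

/-- `x_i` is a multiplicative variable for the term `x^α`, i.e. `x_i ≤ min(x^α)`. -/
def mult (α : Exp n) (i : Fin (n+1)) : Prop := ∀ j ∈ α.support, i ≤ j

/-- Every variable occurring in `x^δ` is multiplicative for `x^α`. -/
def multExp (α δ : Exp n) : Prop := ∀ i ∈ δ.support, mult α i

/-- Pommaret cone of a term. -/
def pommaretCone (α : Exp n) : Set (Exp n) := {γ | ∃ δ, multExp α δ ∧ γ = α + δ}

/-- A set of terms is (the set of terms of) a monomial ideal. -/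
def IsMonomialIdeal (T : Set (Exp n)) : Prop := ∀ α ∈ T, ∀ β, α + β ∈ T

/-- `P` is a Pommaret basis of the set of terms `T`: the terms of `T` are the
disjoint union of the Pommaret cones of the elements of `P`. -/
def IsPommaretBasis (P : Finset (Exp n)) (T : Set (Exp n)) : Prop :=
  (∀ γ, γ ∈ T ↔ ∃ α ∈ P, γ ∈ pommaretCone α) ∧
  ∀ γ : Exp n, ∀ α ∈ P, ∀ β ∈ P, γ ∈ pommaretCone α → γ ∈ pommaretCone β → α = β

/-- Lexicographic order on terms (with `x_n > … > x_0` significance). -/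
def lexLt (η δ : Exp n) : Prop := ∃ i, η i < δ i ∧ ∀ j, i < j → η j = δ j

/-- Terms of the saturation `(J : (x_0,…,x_n)^∞)` of a monomial ideal. -/
def satTerms (T : Set (Exp n)) : Set (Exp n) :=
  {α | ∃ j : ℕ, ∀ β : Exp n, degE β = j → α + β ∈ T}

section ModuleDefs

variable (A : Type*) [CommRing A] {κ : Type*} [Fintype κ] [DecidableEq κ]

/-- The term `x^α e_k` of the free module. -/
noncomputable def termV (α : Exp n) (k : κ) : κ → MvPolynomial (Fin (n+1)) A :=
  Pi.single k (monomial α 1)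

variable {A}

/-- Homogeneity of degree `s` in `S^m_d` (with weight vector `d`). -/
def IsHomogV (d : κ → ℤ) (f : κ → MvPolynomial (Fin (n+1)) A) (s : ℤ) : Prop :=
  ∀ k, ∀ β ∈ (f k).support, (degE β : ℤ) + d k = s

variable (A)

/-- The degree-`s` component `(S^m_d)_s` as an `A`-submodule. -/
noncomputable def homogCompV (d : κ → ℤ) (s : ℤ) :
    Submodule A (κ → MvPolynomial (Fin (n+1)) A) where
  carrier := {f | IsHomogV d f s}
  add_mem' := by
    intro f g hf hg k β hβ
    rcases Finset.mem_union.mp (MvPolynomial.support_add hβ) with h | h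
    · exact hf k β h
    · exact hg k β h
  zero_mem' := by intro k β hβ; simp at hβ
  smul_mem' := by
    intro a f hf k β hβ
    exact hf k β (MvPolynomial.support_smul hβ)

/-- The set `N(U)` of terms of `S^m_d` not belonging to the monomial module `U = ⊕ J^(k) e_k`. -/
def NUTerms (J : κ → Set (Exp n)) : Set (κ → MvPolynomial (Fin (n+1)) A) :=
  {v | ∃ k, ∃ α, α ∉ J k ∧ v = termV A α k}

/-- The degree-`s` part `N(U)_s`. -/
def NUTermsDeg (d : κ → ℤ) (J : κ → Set (Exp n)) (s : ℤ) :
    Set (κ → MvPolynomial (Fin (n+1)) A) :=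
  {v | ∃ k, ∃ α, α ∉ J k ∧ (degE α : ℤ) + d k = s ∧ v = termV A α k}

variable {A}

/-- A `P(U)`-marked set: for each `x^α e_k` with `α ∈ P k`, the element `g α k` has
head term `x^α e_k` (coefficient `1`) and all other terms in `N(U)` of the same degree. -/
def IsMarkedSetV (d : κ → ℤ) (J : κ → Set (Exp n)) (P : κ → Finset (Exp n))
    (g : Exp n → κ → (κ → MvPolynomial (Fin (n+1)) A)) : Prop :=
  ∀ k, ∀ α ∈ P k, ∀ l, ∀ β ∈ ((g α k - termV A α k) l).support,
    β ∉ J l ∧ (degE β : ℤ) + d l = (degE α : ℤ) + d k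

/-- The underlying set of elements of the marked set `G`. -/
def GSet (P : κ → Finset (Exp n)) (g : Exp n → κ → (κ → MvPolynomial (Fin (n+1)) A)) :
    Set (κ → MvPolynomial (Fin (n+1)) A) :=
  {v | ∃ k, ∃ α ∈ P k, v = g α k}

/-- The set `G^(s)` of multiplicative multiples of elements of `G` of degree `s`. -/
def GSdeg (d : κ → ℤ) (P : κ → Finset (Exp n))
    (g : Exp n → κ → (κ → MvPolynomial (Fin (n+1)) A)) (s : ℤ) :
    Set (κ → MvPolynomial (Fin (n+1)) A) :=
  {v | ∃ k, ∃ α ∈ P k, ∃ δ : Exp n, multExp α δ ∧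
    (degE δ : ℤ) + (degE α : ℤ) + d k = s ∧ v = (monomial δ (1:A)) • g α k}

/-- The `S`-submodule `⟨G⟩` generated by the marked set. -/
noncomputable def GmodS (P : κ → Finset (Exp n))
    (g : Exp n → κ → (κ → MvPolynomial (Fin (n+1)) A)) :
    Submodule (MvPolynomial (Fin (n+1)) A) (κ → MvPolynomial (Fin (n+1)) A) :=
  Submodule.span _ (GSet P g)

/-- The degree-`s` component `⟨G⟩_s` as an `A`-submodule. -/
noncomputable def GmodDeg (d : κ → ℤ) (P : κ → Finset (Exp n))
    (g : Exp n → κ → (κ → MvPolynomial (Fin (n+1)) A)) (s : ℤ) :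
    Submodule A (κ → MvPolynomial (Fin (n+1)) A) :=
  (GmodS P g).restrictScalars A ⊓ homogCompV A d s

/-- `G` is a marked basis: `(S^m_d)_s = ⟨G⟩_s ⊕ ⟨N(U)_s⟩^A` for every degree `s`. -/
def MarkedBasisProp (d : κ → ℤ) (J : κ → Set (Exp n)) (P : κ → Finset (Exp n))
    (g : Exp n → κ → (κ → MvPolynomial (Fin (n+1)) A)) : Prop :=
  ∀ s : ℤ,
    homogCompV A d s = GmodDeg d P g s ⊔ Submodule.span A (NUTermsDeg A d J s) ∧
    GmodDeg d P g s ⊓ Submodule.span A (NUTermsDeg A d J s) = ⊥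

/-- One step of the reduction relation `→_G`. -/
def RedStep (P : κ → Finset (Exp n)) (g : Exp n → κ → (κ → MvPolynomial (Fin (n+1)) A))
    (h h' : κ → MvPolynomial (Fin (n+1)) A) : Prop :=
  ∃ k, ∃ α ∈ P k, ∃ η : Exp n, multExp α η ∧
    (h k).coeff (η + α) ≠ 0 ∧
    h' = h - ((h k).coeff (η + α)) • ((monomial η (1:A)) • g α k)

end ModuleDefs

section IdealDefs

variable {A : Type*} [CommRing A]

/-- A `P(J)`-marked set of polynomials. -/
def IsMarkedSetI (T : Set (Exp n)) (P : Finset (Exp n))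
    (g : Exp n → MvPolynomial (Fin (n+1)) A) : Prop :=
  ∀ α ∈ P, ∀ β ∈ (g α - monomial α (1:A)).support, β ∉ T ∧ degE β = degE α

variable (A)

/-- The degree-`s` monomials not in `T`. -/
def NTermsDegI (T : Set (Exp n)) (s : ℕ) : Set (MvPolynomial (Fin (n+1)) A) :=
  {p | ∃ β, β ∉ T ∧ degE β = s ∧ p = monomial β (1:A)}

variable {A}

/-- Degree-`s` part of the ideal generated by the marked set. -/
noncomputable def IdealDegI (P : Finset (Exp n)) (g : Exp n → MvPolynomial (Fin (n+1)) A)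
    (s : ℕ) : Submodule A (MvPolynomial (Fin (n+1)) A) :=
  (Ideal.span (g '' ↑P)).restrictScalars A ⊓ homogeneousSubmodule (Fin (n+1)) A s

/-- A `P(J)`-marked basis of polynomials: `S_s = (G)_s ⊕ ⟨N(J)_s⟩^A` for all `s`. -/
def IsMarkedBasisI (T : Set (Exp n)) (P : Finset (Exp n))
    (g : Exp n → MvPolynomial (Fin (n+1)) A) : Prop :=
  IsMarkedSetI T P g ∧ ∀ s : ℕ,
    homogeneousSubmodule (Fin (n+1)) A s
      = IdealDegI P g s ⊔ Submodule.span A (NTermsDegI A T s) ∧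
    IdealDegI P g s ⊓ Submodule.span A (NTermsDegI A T s) = ⊥

/-- The polynomial `p` involves only multiplicative variables of `x^α`. -/
def multPoly (α : Exp n) (p : MvPolynomial (Fin (n+1)) A) : Prop :=
  ∀ β ∈ p.support, multExp α β

end IdealDefs

section SyzDefs

variable {A : Type*} [CommRing A]

/-- The map `(c_l) ↦ Σ_l c_l f_{α(l)}` whose kernel is `Syz(G)`. -/
noncomputable def syzMap (P : Finset (Exp n)) (g : Exp n → MvPolynomial (Fin (n+1)) A) :
    (↥P → MvPolynomial (Fin (n+1)) A) →ₗ[MvPolynomial (Fin (n+1)) A]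
      MvPolynomial (Fin (n+1)) A where
  toFun c := ∑ l : ↥P, c l * g l.1
  map_add' c c' := by simp [add_mul, Finset.sum_add_distrib]
  map_smul' a c := by simp [Finset.mul_sum, mul_assoc]

/-- Weight vector for the syzygy module: `d_l = deg x^{α(l)}`. -/
def ddeg (P : Finset (Exp n)) : ↥P → ℤ := fun l => (degE l.1 : ℤ)

/-- Terms of the monomial ideal generated by the nonmultiplicative variables of `x^{α(l)}`. -/
def Jsyz (P : Finset (Exp n)) : ↥P → Set (Exp n) :=
  fun l => {β | ∃ i ∈ β.support, ¬ mult (l : Exp n) i}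

open Classical in
/-- The claimed Pommaret basis `{x_i e_l : x_i nonmultiplicative for x^{α(l)}}`. -/
noncomputable def Psyz (P : Finset (Exp n)) : ↥P → Finset (Exp n) := fun l =>
  (Finset.univ.filter fun i : Fin (n+1) => ¬ mult (l : Exp n) i).image
    fun i => Finsupp.single i 1

open Classical in
/-- The syzygy `S_{k;i} = x_i e_k − Σ_l P_l^{k;i} e_l`. -/
noncomputable def Ssyz (P : Finset (Exp n))
    (Pc : ↥P → Fin (n+1) → ↥P → MvPolynomial (Fin (n+1)) A)
    (k : ↥P) (i : Fin (n+1)) : ↥P → MvPolynomial (Fin (n+1)) A :=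
  fun l => (if l = k then (X i : MvPolynomial (Fin (n+1)) A) else 0) - Pc k i l

/-- The set `G_Syz^(s)`. -/
def GSyzDeg (P : Finset (Exp n))
    (Pc : ↥P → Fin (n+1) → ↥P → MvPolynomial (Fin (n+1)) A) (s : ℤ) :
    Set (↥P → MvPolynomial (Fin (n+1)) A) :=
  {v | ∃ k : ↥P, ∃ i : Fin (n+1), ¬ mult (k : Exp n) i ∧ ∃ δ : Exp n,
    (∀ j ∈ δ.support, j ≤ i) ∧ (degE δ : ℤ) + 1 + ddeg P k = s ∧
    v = (monomial δ (1:A)) • Ssyz P Pc k i}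

end SyzDefs


section Aux

variable {n : ℕ} {κ : Type*} [Fintype κ] [DecidableEq κ] {A : Type*} [CommRing A]

lemma mem_support_termV {α β : Exp n} {k l : κ}
    (hβ : β ∈ ((termV A α k) l).support) : l = k ∧ β = α := by
  classical
  rcases eq_or_ne l k with rfl | hlk
  · refine ⟨rfl, ?_⟩
    rw [show termV A α l l = monomial α (1:A) from Pi.single_eq_same _ _] at hβ
    rw [MvPolynomial.support_monomial] at hβ
    split at hβ
    · exact absurd hβ (by simp)
    · exact Finset.mem_singleton.mp hβ
  · rw [show termV A α k l = 0 from Pi.single_eq_of_ne hlk _] at hβ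
    simp at hβ

lemma termV_homog (d : κ → ℤ) (α : Exp n) (k : κ) (s : ℤ)
    (h : (degE α : ℤ) + d k = s) : IsHomogV d (termV A α k) s := by
  intro l β hβ
  obtain ⟨rfl, rfl⟩ := mem_support_termV hβ
  exact h

/-- The submodule of vectors all of whose component supports satisfy `Q`. -/
noncomputable def suppSub (Q : κ → Exp n → Prop) : Submodule A (κ → MvPolynomial (Fin (n+1)) A) where
  carrier := {v | ∀ l, ∀ β ∈ (v l).support, Q l β}
  add_mem' := by
    intro f g hf hg l β hβ
    rcases Finset.mem_union.mp (MvPolynomial.support_add hβ) with h | h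
    · exact hf l β h
    · exact hg l β h
  zero_mem' := by intro l β hβ; simp at hβ
  smul_mem' := by
    intro a f hf l β hβ
    exact hf l β (MvPolynomial.support_smul hβ)

lemma mem_of_supp_mem (N : Submodule A (κ → MvPolynomial (Fin (n+1)) A))
    (v : κ → MvPolynomial (Fin (n+1)) A)
    (h : ∀ l, ∀ β ∈ (v l).support, termV A β l ∈ N) : v ∈ N := by
  rw [← Finset.univ_sum_single v]
  refine Submodule.sum_mem _ fun l _ => ?_
  have h2 : Pi.single l (v l) = ∑ β ∈ (v l).support, ((v l).coeff β) • termV A β l := by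
    have hs : (LinearMap.single A (fun _ : κ => MvPolynomial (Fin (n+1)) A) l) (v l)
        = ∑ β ∈ (v l).support,
            (LinearMap.single A (fun _ : κ => MvPolynomial (Fin (n+1)) A) l)
              (monomial β ((v l).coeff β)) := by
      conv_lhs => rw [← MvPolynomial.support_sum_monomial_coeff (v l)]
      exact map_sum _ _ _
    refine hs.trans (Finset.sum_congr rfl fun β hβ => ?_)
    rw [LinearMap.coe_single]
    have hmono : (monomial β ((v l).coeff β) : MvPolynomial (Fin (n+1)) A)
        = ((v l).coeff β) • monomial β 1 := by
      rw [MvPolynomial.smul_monomial, smul_eq_mul, mul_one]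
    rw [hmono, Pi.single_smul]
    rfl
  rw [h2]
  exact Submodule.sum_mem _ fun β hβ => Submodule.smul_mem _ _ (h l β hβ)

lemma spanNU_le (d : κ → ℤ) (J : κ → Set (Exp n)) (s : ℤ) :
    Submodule.span A (NUTermsDeg A d J s)
      ≤ suppSub (fun l β => β ∉ J l ∧ (degE β : ℤ) + d l = s) := by
  rw [Submodule.span_le]
  rintro v ⟨k, α, hα, hdeg, rfl⟩
  intro l β hβ
  obtain ⟨rfl, rfl⟩ := mem_support_termV hβ
  exact ⟨hα, hdeg⟩

end Aux

/-- Lemma `markedOnMon`: if `N(U)_s` generates `(S^m_d)_s / M_s` for every `s`,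
then for every `s` there is a marked set `F ⊆ M_s` over the degree-`s` terms of `U`
with `(S^m_d)_s = ⟨F⟩^A ⊕ ⟨N(U)_s⟩^A`. -/
theorem statement0 {n : ℕ} {κ : Type*} [Fintype κ] [DecidableEq κ] (hm : Nonempty κ)
    {A : Type*} [CommRing A] [IsNoetherianRing A]
    (d : κ → ℤ) (J : κ → Set (Exp n))
    (hJ : ∀ k, IsMonomialIdeal (J k))
    (hfin : ∀ k, ∃ B : Finset (Exp n), ∀ α, α ∈ J k ↔ ∃ β ∈ B, ∃ δ, α = β + δ)
    (M : Submodule (MvPolynomial (Fin (n+1)) A) (κ → MvPolynomial (Fin (n+1)) A))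
    (hgr : M = Submodule.span (MvPolynomial (Fin (n+1)) A)
        {f | f ∈ M ∧ ∃ s : ℤ, IsHomogV d f s})
    (hquot : ∀ s : ℤ, homogCompV A d s ≤
        M.restrictScalars A ⊔ Submodule.span A (NUTermsDeg A d J s)) :
    ∀ s : ℤ, ∃ F : Exp n → κ → (κ → MvPolynomial (Fin (n+1)) A),
      (∀ k, ∀ α ∈ J k, (degE α : ℤ) + d k = s →
        F α k ∈ M ∧ IsHomogV d (F α k) s ∧
        ∀ l, ∀ β ∈ ((F α k - termV A α k) l).support, β ∉ J l) ∧
      homogCompV A d s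
        = Submodule.span A {v | ∃ k, ∃ α, α ∈ J k ∧ (degE α : ℤ) + d k = s ∧ v = F α k}
          ⊔ Submodule.span A (NUTermsDeg A d J s) ∧
      Submodule.span A {v | ∃ k, ∃ α, α ∈ J k ∧ (degE α : ℤ) + d k = s ∧ v = F α k}
          ⊓ Submodule.span A (NUTermsDeg A d J s) = ⊥ := by
  classical
  intro s
  have hNUsupp : ∀ v ∈ Submodule.span A (NUTermsDeg A d J s),
      ∀ l, ∀ β ∈ (v l).support, β ∉ J l ∧ (degE β : ℤ) + d l = s :=
    fun v hv => spanNU_le d J s hv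
  have hex : ∀ (k : κ) (α : Exp n), α ∈ J k → (degE α : ℤ) + d k = s →
      ∃ f : κ → MvPolynomial (Fin (n+1)) A, f ∈ M ∧ IsHomogV d f s ∧
        termV A α k - f ∈ Submodule.span A (NUTermsDeg A d J s) := by
    intro k α hα hdeg
    have ht : termV A α k ∈ homogCompV A d s := termV_homog d α k s hdeg
    obtain ⟨m, hm, ν, hν, hsum⟩ := Submodule.mem_sup.mp (hquot s ht)
    have hνh : ν ∈ homogCompV A d s := fun l β hβ => (hNUsupp ν hν l β hβ).2
    have hmh : m ∈ homogCompV A d s := by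
      have hmeq : m = termV A α k - ν := by rw [← hsum]; abel
      rw [hmeq]; exact Submodule.sub_mem _ ht hνh
    have htail : termV A α k - m = ν := by rw [← hsum]; abel
    exact ⟨m, hm, hmh, htail ▸ hν⟩
  choose! f hfM hfH hfNU using hex
  have htail : ∀ (k : κ) (α : Exp n), α ∈ J k → (degE α : ℤ) + d k = s →
      ∀ l, ∀ β ∈ ((f k α - termV A α k) l).support,
        β ∉ J l ∧ (degE β : ℤ) + d l = s := by
    intro k α hα hdeg l β hβ
    have h1 : (f k α - termV A α k) l = -((termV A α k - f k α) l) := by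
      rw [Pi.sub_apply, Pi.sub_apply, neg_sub]
    rw [h1, MvPolynomial.support_neg] at hβ
    exact hNUsupp _ (hfNU k α hα hdeg) l β hβ
  refine ⟨fun α k => f k α, ?_, ?_, ?_⟩
  · intro k α hα hdeg
    exact ⟨hfM k α hα hdeg, hfH k α hα hdeg,
      fun l β hβ => (htail k α hα hdeg l β hβ).1⟩
  · apply le_antisymm
    · intro h hh
      refine mem_of_supp_mem _ h fun l β hβ => ?_
      have hdeg : (degE β : ℤ) + d l = s := hh l β hβ
      by_cases hJl : β ∈ J l
      · have hFmem : f l β ∈ Submodule.span A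
            {v | ∃ k, ∃ α, α ∈ J k ∧ (degE α : ℤ) + d k = s ∧ v = f k α} :=
          Submodule.subset_span ⟨l, β, hJl, hdeg, rfl⟩
        have htl : f l β - termV A β l ∈ Submodule.span A (NUTermsDeg A d J s) :=
          mem_of_supp_mem _ _ fun l' β' hβ' => Submodule.subset_span
            ⟨l', β', (htail l β hJl hdeg l' β' hβ').1,
              (htail l β hJl hdeg l' β' hβ').2, rfl⟩
        have heq : termV A β l = f l β - (f l β - termV A β l) := by abel
        rw [heq]
        exact Submodule.sub_mem _ (Submodule.mem_sup_left hFmem)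
          (Submodule.mem_sup_right htl)
      · exact Submodule.mem_sup_right (Submodule.subset_span ⟨l, β, hJl, hdeg, rfl⟩)
    · refine sup_le ?_ ?_
      · rw [Submodule.span_le]
        rintro v ⟨k, α, hα, hdeg, rfl⟩
        exact hfH k α hα hdeg
      · rw [Submodule.span_le]
        rintro v ⟨k, α, hα, hdeg, rfl⟩
        exact termV_homog d α k s hdeg
  · set B : Module.Basis ((_ : κ) × Exp n) A (κ → MvPolynomial (Fin (n+1)) A) :=
      Pi.basis fun _ => MvPolynomial.basisMonomials (Fin (n+1)) A with hBdef
    have hB : ∀ (k : κ) (α : Exp n), B ⟨k, α⟩ = termV A α k := by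
      intro k α
      rw [hBdef, Pi.basis_apply]
      rfl
    set π : (κ → MvPolynomial (Fin (n+1)) A) →ₗ[A] (κ → MvPolynomial (Fin (n+1)) A) :=
      B.constr ℕ fun p => if p.2 ∈ J p.1 then termV A p.2 p.1 else 0 with hπdef
    set Φ : (κ → MvPolynomial (Fin (n+1)) A) →ₗ[A] (κ → MvPolynomial (Fin (n+1)) A) :=
      B.constr ℕ fun p =>
        if p.2 ∈ J p.1 ∧ (degE p.2 : ℤ) + d p.1 = s then f p.1 p.2 else 0 with hΦdef
    have hπT : ∀ (k : κ) (α : Exp n),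
        π (termV A α k) = if α ∈ J k then termV A α k else 0 := by
      intro k α
      have h := B.constr_basis ℕ
        (fun p => if p.2 ∈ J p.1 then termV A p.2 p.1 else 0) ⟨k, α⟩
      rw [hB] at h
      exact h
    have hΦT : ∀ (k : κ) (α : Exp n), Φ (termV A α k)
        = if α ∈ J k ∧ (degE α : ℤ) + d k = s then f k α else 0 := by
      intro k α
      have h := B.constr_basis ℕ
        (fun p => if p.2 ∈ J p.1 ∧ (degE p.2 : ℤ) + d p.1 = s then f p.1 p.2 else 0) ⟨k, α⟩
      rw [hB] at h
      exact h
    have hπ0 : ∀ v : κ → MvPolynomial (Fin (n+1)) A,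
        (∀ l, ∀ β ∈ (v l).support, β ∉ J l) → π v = 0 := by
      intro v hv
      have : v ∈ LinearMap.ker π := by
        refine mem_of_supp_mem _ v fun l β hβ => ?_
        rw [LinearMap.mem_ker, hπT l β, if_neg (hv l β hβ)]
      exact LinearMap.mem_ker.mp this
    have hkey : Submodule.span A
        {v | ∃ k, ∃ α, α ∈ J k ∧ (degE α : ℤ) + d k = s ∧ v = f k α}
          ≤ LinearMap.eqLocus (Φ ∘ₗ π) LinearMap.id := by
      rw [Submodule.span_le]
      rintro v ⟨k, α, hα, hdeg, rfl⟩
      show Φ (π (f k α)) = f k α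
      have h2 : π (f k α) = π (termV A α k) + π (f k α - termV A α k) := by
        rw [← map_add]; congr 1; abel
      rw [h2, hπT, if_pos hα,
        hπ0 _ (fun l β hβ => (htail k α hα hdeg l β hβ).1), add_zero,
        hΦT, if_pos ⟨hα, hdeg⟩]
    rw [eq_bot_iff]
    intro v hv
    obtain ⟨hvF, hvNU⟩ := Submodule.mem_inf.mp hv
    have h1 : Φ (π v) = v := hkey hvF
    have h2 : π v = 0 := hπ0 v fun l β hβ => (hNUsupp v hvNU l β hβ).1
    rw [h2, map_zero] at h1
    simpa [Submodule.mem_bot] using h1.symm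


end MB
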